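/- Let J, R, Q be real n×n matrices with Jᵀ = −J, R positive semidefinite, and Q positive semidefinite. Then every eigenvalue λ ∈ ℂ of the matrix (J − R)Q (viewed as a complex matrix) satisfies Re(λ) ≤ 0. -/

import Mathlib

open Matrix ComplexOrder

/-- The complexification of a real matrix. -/
noncomputable def toC {n : ℕ} (A : Matrix (Fin n) (Fin n) ℝ) : Matrix (Fin n) (Fin n) ℂ :=
  A.map (fun a => (a : ℂ))

lemma toC_mul {n : ℕ} (A B : Matrix (Fin n) (Fin n) ℝ) :
    toC (A * B) = toC A * toC B :=
  Matrix.map_mul (f := Complex.ofRealHom)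

lemma toC_conjTranspose {n : ℕ} (A : Matrix (Fin n) (Fin n) ℝ) :
    (toC A)ᴴ = toC Aᵀ := by
  ext i j
  simp [toC, conjTranspose_apply, Complex.conj_ofReal]

lemma toC_psd {n : ℕ} (A : Matrix (Fin n) (Fin n) ℝ) (hA : A.PosSemidef) :
    (toC A).PosSemidef := by
  obtain ⟨B, rfl⟩ : ∃ B : Matrix (Fin n) (Fin n) ℝ, A = Bᴴ * B := by
    open scoped MatrixOrder in
    obtain ⟨B, hB⟩ := CStarAlgebra.nonneg_iff_eq_star_mul_self.mp hA.nonneg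
    exact ⟨B, by simpa [star_eq_conjTranspose] using hB⟩
  rw [toC_mul]
  have h : toC Bᴴ = (toC B)ᴴ := by rw [toC_conjTranspose]; rfl
  rw [h]
  exact Matrix.posSemidef_conjTranspose_mul_self _

theorem eigenvalues_DH_psd_nonpos_re {n : ℕ} (J R Q : Matrix (Fin n) (Fin n) ℝ)
    (hJ : Jᵀ = -J) (hR : R.PosSemidef) (hQ : Q.PosSemidef)
    (μ : ℂ) (x : Fin n → ℂ) (hx : x ≠ 0) (heig : toC ((J - R) * Q) *ᵥ x = μ • x) :
    μ.re ≤ 0 := by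
  have hQc := toC_psd Q hQ
  set y : Fin n → ℂ := toC Q *ᵥ x with hy
  have hsplit : toC ((J - R) * Q) = (toC J - toC R) * toC Q := by
    rw [toC_mul]; congr 1; ext i j; simp [toC]
  set s : ℂ := star x ⬝ᵥ (toC Q *ᵥ x) with hs
  have hs_nonneg : 0 ≤ s := hQc.dotProduct_mulVec_nonneg x
  have hstar_y : star y = star x ᵥ* toC Q := by
    rw [hy, star_mulVec, hQc.1.eq]
  have hJRy : (toC J - toC R) *ᵥ y = μ • x := by
    rw [hy, mulVec_mulVec, ← hsplit, heig]
  have hsy : star y ⬝ᵥ x = s := by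
    rw [hstar_y, hs, ← dotProduct_mulVec]
  have ht : star y ⬝ᵥ ((toC J - toC R) *ᵥ y) = μ * s := by
    rw [hJRy, dotProduct_smul, smul_eq_mul, hsy]
  have hJskew : (toC J)ᴴ = -(toC J) := by
    rw [toC_conjTranspose, hJ]
    ext i j; simp [toC]
  have hJre : (star y ⬝ᵥ (toC J *ᵥ y)).re = 0 := by
    have h1 : star (star y ⬝ᵥ (toC J *ᵥ y)) = star y ⬝ᵥ ((toC J)ᴴ *ᵥ y) := by
      rw [← star_dotProduct, star_mulVec, ← dotProduct_mulVec]
    rw [hJskew, neg_mulVec, dotProduct_neg] at h1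
    have h2 := congrArg Complex.re h1
    simp only [Complex.neg_re] at h2
    have h3 : (star (star y ⬝ᵥ (toC J *ᵥ y))).re = (star y ⬝ᵥ (toC J *ᵥ y)).re := by
      simp [Complex.star_def]
    linarith [h2, h3]
  have hRre : 0 ≤ (star y ⬝ᵥ (toC R *ᵥ y)).re := by
    have h := (toC_psd R hR).dotProduct_mulVec_nonneg y
    rw [Complex.le_def] at h
    simpa using h.1
  have hts : (μ * s).re ≤ 0 := by
    rw [← ht]
    have h : star y ⬝ᵥ ((toC J - toC R) *ᵥ y)
        = star y ⬝ᵥ (toC J *ᵥ y) - star y ⬝ᵥ (toC R *ᵥ y) := by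
      rw [sub_mulVec, dotProduct_sub]
    rw [h, Complex.sub_re, hJre]
    linarith
  rw [Complex.le_def] at hs_nonneg
  obtain ⟨hsre, hsim⟩ := hs_nonneg
  simp only [Complex.zero_re, Complex.zero_im] at hsre hsim
  rcases lt_or_eq_of_le hsre with hpos | hzero
  · rw [Complex.mul_re, ← hsim, mul_zero, sub_zero] at hts
    nlinarith
  · have hs0 : s = 0 := by
      apply Complex.ext <;> simp [← hzero, ← hsim]
    have hQx : toC Q *ᵥ x = 0 :=
      (hQc.dotProduct_mulVec_zero_iff x).mp (by rw [← hs]; exact hs0)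
    have hμx : μ • x = 0 := by
      rw [← heig, hsplit, ← mulVec_mulVec, hQx, mulVec_zero]
    rcases smul_eq_zero.mp hμx with hμ | hx0
    · simp [hμ]
    · exact absurd hx0 hx
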